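/- Let H ≤ S_d and G = S_n × H act on ℝ^{n×d} as rows-permutation combined with a common column permutation from H. The dimension of the space of linear G-equivariant maps ℝ^{n×d} → ℝ^{n×d} equals 2·E(H), where E(H) is the dimension of the space of linear H-equivariant maps ℝ^d → ℝ^d (assuming n ≥ 2). -/

import Mathlib

/-- The submodule of linear endomorphisms of `α → ℝ` that are equivariant with respect to the
permutation action of a subgroup `G` of the symmetric group. -/
noncomputable def equivSubmodule {α : Type*} [Fintype α] [DecidableEq α]
    (G : Subgroup (Equiv.Perm α)) :
    Submodule ℝ ((α → ℝ) →ₗ[ℝ] (α → ℝ)) where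
  carrier := {L | ∀ g ∈ G, ∀ x : α → ℝ, (L fun i => x (g⁻¹ i)) = fun i => L x (g⁻¹ i)}
  add_mem' := by
    intro L M hL hM g hg x
    simp only [LinearMap.add_apply, hL g hg x, hM g hg x]
    rfl
  zero_mem' := by intro g hg x; simp; rfl
  smul_mem' := by
    intro c L hL g hg x
    simp only [LinearMap.smul_apply, hL g hg x]
    rfl

/-- The submodule of linear endomorphisms of `ℝ^{n×d}` equivariant to `G = S_n × H`
acting by `((q,h)·X)_{ij} = X_{q⁻¹(i),h⁻¹(j)}`. -/
noncomputable def dssSubmodule {n d : ℕ} (H : Subgroup (Equiv.Perm (Fin d))) :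
    Submodule ℝ ((Fin n → Fin d → ℝ) →ₗ[ℝ] (Fin n → Fin d → ℝ)) where
  carrier := {L | ∀ (q : Equiv.Perm (Fin n)), ∀ h ∈ H, ∀ X : Fin n → Fin d → ℝ,
    (L fun i => fun j => X (q⁻¹ i) (h⁻¹ j)) = fun i => fun j => L X (q⁻¹ i) (h⁻¹ j)}
  add_mem' := by
    intro L M hL hM q h hh X
    simp only [LinearMap.add_apply, hL q h hh X, hM q h hh X]
    rfl
  zero_mem' := by intro q h hh X; simp; rfl
  smul_mem' := by
    intro c L hL q h hh X
    simp only [LinearMap.smul_apply, hL q h hh X]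
    rfl

section DSSAux

variable {n d : ℕ} {H : Subgroup (Equiv.Perm (Fin d))}

/-- Extract a `d × d` linear map from a layer `L` by inserting into row `k` and reading row `i`. -/
private noncomputable def rowMap (k i : Fin n)
    (L : (Fin n → Fin d → ℝ) →ₗ[ℝ] (Fin n → Fin d → ℝ)) :
    (Fin d → ℝ) →ₗ[ℝ] (Fin d → ℝ) :=
  (LinearMap.proj i) ∘ₗ L ∘ₗ (LinearMap.single ℝ (fun _ : Fin n => Fin d → ℝ) k)

private lemma rowMap_apply (k i : Fin n)
    (L : (Fin n → Fin d → ℝ) →ₗ[ℝ] (Fin n → Fin d → ℝ)) (x : Fin d → ℝ) :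
    rowMap k i L x = L (Pi.single k x) i := rfl

private lemma single_perm (q : Equiv.Perm (Fin n)) (k : Fin n) (x : Fin d → ℝ) :
    (fun i => fun j => Pi.single (M := fun _ : Fin n => Fin d → ℝ) k x (q⁻¹ i) j)
      = Pi.single (M := fun _ : Fin n => Fin d → ℝ) (q k) x := by
  funext i j
  simp only [Pi.single_apply]
  have hiff : q⁻¹ i = k ↔ i = q k := by
    constructor
    · intro h; rw [← h]; simp
    · intro h; rw [h]; simp
  by_cases h : i = q k
  · simp [hiff, h]
  · rw [if_neg (fun hc => h (hiff.mp hc)), if_neg h]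

/-- Row transitivity: applying `L` to a single row placed at `q k`. -/
private lemma row_perm {L : (Fin n → Fin d → ℝ) →ₗ[ℝ] (Fin n → Fin d → ℝ)}
    (hL : L ∈ dssSubmodule H) (q : Equiv.Perm (Fin n)) (k i : Fin n) (x : Fin d → ℝ) :
    L (Pi.single (q k) x) i = L (Pi.single k x) (q⁻¹ i) := by
  have h := hL q 1 (one_mem H) (Pi.single k x)
  simp only [inv_one, Equiv.Perm.one_apply] at h
  rw [show (fun i => fun j => Pi.single (M := fun _ : Fin n => Fin d → ℝ) k x (q⁻¹ i) j)
      = Pi.single (M := fun _ : Fin n => Fin d → ℝ) (q k) x from single_perm q k x] at h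
  exact congrFun h i

/-- The key orbit computation: `L (Pi.single k x) i` only depends on whether `i = k`. -/
private lemma key_lemma {L : (Fin n → Fin d → ℝ) →ₗ[ℝ] (Fin n → Fin d → ℝ)}
    (hL : L ∈ dssSubmodule H) {z o : Fin n} (hzo : z ≠ o) (k i : Fin n) (x : Fin d → ℝ) :
    L (Pi.single k x) i =
      if i = k then L (Pi.single z x) z else L (Pi.single z x) o := by
  have hswap : L (Pi.single k x) i = L (Pi.single z x) (Equiv.swap z k i) := by
    have := row_perm hL (Equiv.swap z k) z i x
    rw [Equiv.swap_apply_left] at this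
    rw [this, Equiv.swap_inv]
  by_cases h : i = k
  · subst h
    rw [hswap, Equiv.swap_apply_right]
    simp
  · rw [hswap]
    set m := Equiv.swap z k i with hm
    have hmz : m ≠ z := by
      intro hc
      apply h
      have : Equiv.swap z k i = Equiv.swap z k k := by
        rw [← hm, hc, Equiv.swap_apply_right]
      exact (Equiv.swap z k).injective this
    have hL2 : L (Pi.single z x) m = L (Pi.single z x) o := by
      have hperm := row_perm hL (Equiv.swap o m) z m x
      have hfix : Equiv.swap o m z = z :=
        Equiv.swap_apply_of_ne_of_ne hzo (Ne.symm hmz)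
      rw [hfix] at hperm
      rw [hperm]
      simp [Equiv.swap_inv, Equiv.swap_apply_right]
    rw [hL2]
    simp [h]

/-- Decomposition of an equivariant layer in terms of its two row maps. -/
private lemma decomp {L : (Fin n → Fin d → ℝ) →ₗ[ℝ] (Fin n → Fin d → ℝ)}
    (hL : L ∈ dssSubmodule H) {z o : Fin n} (hzo : z ≠ o) (X : Fin n → Fin d → ℝ) (i : Fin n) :
    L X i = rowMap z z L (X i) + rowMap z o L (∑ k, X k) - rowMap z o L (X i) := by
  have hX : X = ∑ k, Pi.single k (X k) := (Finset.univ_sum_single X).symm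
  calc L X i = (∑ k, L (Pi.single k (X k))) i := by rw [← map_sum, ← hX]
    _ = ∑ k, L (Pi.single k (X k)) i := by rw [Finset.sum_apply]
    _ = ∑ k, (if i = k then L (Pi.single z (X k)) z else L (Pi.single z (X k)) o) := by
        exact Finset.sum_congr rfl fun k _ => key_lemma hL hzo k i (X k)
    _ = ∑ k, (L (Pi.single z (X k)) o
          + if i = k then L (Pi.single z (X k)) z - L (Pi.single z (X k)) o else 0) := by
        refine Finset.sum_congr rfl fun k _ => ?_
        by_cases h : i = k <;> simp [h]
    _ = rowMap z z L (X i) + rowMap z o L (∑ k, X k) - rowMap z o L (X i) := by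
        rw [Finset.sum_add_distrib, Finset.sum_ite_eq]
        simp only [Finset.mem_univ, if_true]
        have hs : ∑ k, L (Pi.single z (X k)) o = rowMap z o L (∑ k, X k) := by
          have := map_sum (rowMap z o L) (fun k => X k) Finset.univ
          simp only [rowMap_apply] at this
          exact this.symm
        rw [hs, rowMap_apply, rowMap_apply]
        abel

/-- The row maps of an equivariant layer are `H`-equivariant. -/
private lemma rowMap_mem {L : (Fin n → Fin d → ℝ) →ₗ[ℝ] (Fin n → Fin d → ℝ)}
    (hL : L ∈ dssSubmodule H) (k i : Fin n) :
    rowMap k i L ∈ equivSubmodule H := by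
  intro g hg x
  have h := hL 1 g hg (Pi.single k x)
  simp only [inv_one, Equiv.Perm.one_apply] at h
  have harg : (fun i' => fun j => Pi.single (M := fun _ : Fin n => Fin d → ℝ) k x i' (g⁻¹ j))
      = Pi.single (M := fun _ : Fin n => Fin d → ℝ) k (fun j => x (g⁻¹ j)) := by
    funext i' j
    simp only [Pi.single_apply]
    split <;> rfl
  rw [harg] at h
  funext j
  rw [rowMap_apply]
  rw [h]
  rfl

/-- The layer built from two `d × d` maps `A` (diagonal) and `B` (off-diagonal). -/
private noncomputable def psiMap (A B : (Fin d → ℝ) →ₗ[ℝ] (Fin d → ℝ)) :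
    (Fin n → Fin d → ℝ) →ₗ[ℝ] (Fin n → Fin d → ℝ) where
  toFun X := fun i => A (X i) + B (∑ k, X k) - B (X i)
  map_add' X Y := by
    funext i j
    simp only [Pi.add_apply, Finset.sum_add_distrib, map_add, Pi.sub_apply]
    ring
  map_smul' c X := by
    funext i j
    simp only [Pi.smul_apply, ← Finset.smul_sum, map_smul, RingHom.id_apply,
      Pi.add_apply, Pi.sub_apply, smul_eq_mul]
    ring

private lemma psiMap_apply (A B : (Fin d → ℝ) →ₗ[ℝ] (Fin d → ℝ))
    (X : Fin n → Fin d → ℝ) (i : Fin n) :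
    psiMap A B X i = A (X i) + B (∑ k, X k) - B (X i) := rfl

private lemma psiMap_mem {A B : (Fin d → ℝ) →ₗ[ℝ] (Fin d → ℝ)}
    (hA : A ∈ equivSubmodule H) (hB : B ∈ equivSubmodule H) :
    psiMap A B ∈ dssSubmodule (n := n) H := by
  intro q h hh X
  funext i j
  have hsum : ∑ k, (fun j' => X (q⁻¹ k) (h⁻¹ j')) = fun j' => (∑ k, X k) (h⁻¹ j') := by
    funext j'
    rw [Finset.sum_apply]
    simp only [Finset.sum_apply]
    exact Equiv.sum_comp q⁻¹ (fun k => X k (h⁻¹ j'))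
  show (psiMap A B (fun i' => fun j' => X (q⁻¹ i') (h⁻¹ j'))) i j = _
  rw [psiMap_apply]
  have h1 : A (fun j' => X (q⁻¹ i) (h⁻¹ j')) = fun j' => A (X (q⁻¹ i)) (h⁻¹ j') :=
    hA h hh (X (q⁻¹ i))
  have h2 : B (fun j' => X (q⁻¹ i) (h⁻¹ j')) = fun j' => B (X (q⁻¹ i)) (h⁻¹ j') :=
    hB h hh (X (q⁻¹ i))
  have h3 : B (∑ k, fun j' => X (q⁻¹ k) (h⁻¹ j')) = fun j' => B (∑ k, X k) (h⁻¹ j') := by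
    rw [hsum]; exact hB h hh (∑ k, X k)
  simp only [h1, h2, h3, psiMap_apply]
  simp [Pi.add_apply, Pi.sub_apply]

end DSSAux

/-- **Dimension of the space of DSS layers:** for `n ≥ 2`, the space of linear
`S_n × H`-equivariant maps `ℝ^{n×d} → ℝ^{n×d}` has dimension `2·E(H)`. -/
theorem finrank_dssSubmodule {n d : ℕ} (hn : 2 ≤ n) (H : Subgroup (Equiv.Perm (Fin d))) :
    Module.finrank ℝ (dssSubmodule (n := n) H) =
      2 * Module.finrank ℝ (equivSubmodule H) := by
  set z : Fin n := ⟨0, by omega⟩ with hz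
  set o : Fin n := ⟨1, by omega⟩ with ho
  have hzo : z ≠ o := by simp [hz, ho, Fin.ext_iff]
  -- The forward map: L ↦ (A, B)
  let Φ : (dssSubmodule (n := n) H) →ₗ[ℝ]
      (equivSubmodule H) × (equivSubmodule H) :=
    { toFun := fun L => (⟨rowMap z z L.1, rowMap_mem L.2 z z⟩,
        ⟨rowMap z o L.1, rowMap_mem L.2 z o⟩)
      map_add' := by
        intro L M
        refine Prod.ext (Subtype.ext ?_) (Subtype.ext ?_) <;>
          · apply LinearMap.ext; intro x; rfl
      map_smul' := by
        intro c L
        refine Prod.ext (Subtype.ext ?_) (Subtype.ext ?_) <;>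
          · apply LinearMap.ext; intro x; rfl }
  -- The backward map: (A, B) ↦ psiMap A B
  let Ψ : (equivSubmodule H) × (equivSubmodule H) →ₗ[ℝ]
      (dssSubmodule (n := n) H) :=
    { toFun := fun p => ⟨psiMap p.1.1 p.2.1, psiMap_mem p.1.2 p.2.2⟩
      map_add' := by
        intro p q
        refine Subtype.ext (LinearMap.ext fun X => ?_)
        funext i j
        show psiMap (p.1.1 + q.1.1) (p.2.1 + q.2.1) X i j = _
        simp only [psiMap_apply, LinearMap.add_apply, Pi.add_apply, Pi.sub_apply]
        show _ = psiMap p.1.1 p.2.1 X i j + psiMap q.1.1 q.2.1 X i j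
        simp only [psiMap_apply, Pi.add_apply, Pi.sub_apply]
        ring
      map_smul' := by
        intro c p
        refine Subtype.ext (LinearMap.ext fun X => ?_)
        funext i j
        show psiMap (c • p.1.1) (c • p.2.1) X i j = _
        simp only [psiMap_apply, LinearMap.smul_apply, Pi.smul_apply, Pi.add_apply,
          Pi.sub_apply, smul_eq_mul]
        show _ = c • psiMap p.1.1 p.2.1 X i j
        simp only [psiMap_apply, Pi.smul_apply, Pi.add_apply, Pi.sub_apply, smul_eq_mul]
        ring }
  have hΨΦ : ∀ L : dssSubmodule (n := n) H, Ψ (Φ L) = L := by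
    intro L
    refine Subtype.ext (LinearMap.ext fun X => ?_)
    funext i j
    show psiMap (rowMap z z L.1) (rowMap z o L.1) X i j = L.1 X i j
    rw [psiMap_apply]
    rw [decomp L.2 hzo X i]
  have hΦΨ : ∀ p : (equivSubmodule H) × (equivSubmodule H), Φ (Ψ p) = p := by
    intro p
    have hsingle : ∀ x : Fin d → ℝ, ∑ k, Pi.single (M := fun _ : Fin n => Fin d → ℝ) z x k = x := by
      intro x
      funext j
      rw [Finset.sum_apply]
      simp [Pi.single_apply, apply_ite (fun f : Fin d → ℝ => f j), Finset.sum_ite_eq']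
    refine Prod.ext (Subtype.ext (LinearMap.ext fun x => ?_))
      (Subtype.ext (LinearMap.ext fun x => ?_))
    · show rowMap z z (psiMap p.1.1 p.2.1) x = p.1.1 x
      rw [rowMap_apply, psiMap_apply, hsingle x, Pi.single_eq_same]
      abel
    · show rowMap z o (psiMap p.1.1 p.2.1) x = p.2.1 x
      rw [rowMap_apply, psiMap_apply, hsingle x, Pi.single_eq_of_ne (Ne.symm hzo)]
      simp
  let e : (dssSubmodule (n := n) H) ≃ₗ[ℝ] (equivSubmodule H) × (equivSubmodule H) :=
    { Φ with
      invFun := Ψ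
      left_inv := hΨΦ
      right_inv := hΦΨ }
  have he : Module.finrank ℝ (dssSubmodule (n := n) H)
      = Module.finrank ℝ ((equivSubmodule H) × (equivSubmodule H)) :=
    e.finrank_eq
  haveI : Module.Free ℝ (equivSubmodule H) :=
    Module.Free.of_basis (Module.Basis.ofVectorSpace ℝ (equivSubmodule H))
  have hp : Module.finrank ℝ ((equivSubmodule H) × (equivSubmodule H))
      = Module.finrank ℝ (equivSubmodule H) + Module.finrank ℝ (equivSubmodule H) :=
    Module.finrank_prod
  rw [he, hp, two_mul]
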